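/- Let b > 0 and let f : (0,b) → ℝ be such that f and f' are locally absolutely continuous on (0,b) and f(x) ≠ 0 for all x ∈ (0,b). Fix x₀ ∈ (0,b) and define η_±(x) = 2^{-1/2} f(x) exp(± ∫_x^{x₀} f(x')^{-2} dx'). Then η₊ and η₋ are solutions of -ψ''(x) + [f''(x)/f(x) + 1/f(x)⁴] ψ(x) = 0 on (0,b), and their Wronskian satisfies W(η₊, η₋)(x) = η₊(x)η₋'(x) - η₊'(x)η₋(x) = 1 for all x ∈ (0,b). -/

import Mathlib

open MeasureTheory Set intervalIntegral

/-- `η₊(x) = 2^{-1/2} f(x) exp(∫_x^{x₀} f⁻²)`. -/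
noncomputable def etaPlus (f : ℝ → ℝ) (x₀ x : ℝ) : ℝ :=
  (2 : ℝ) ^ (-(1 / 2 : ℝ)) * f x * Real.exp (∫ t in x..x₀, (f t ^ 2)⁻¹)

/-- `η₋(x) = 2^{-1/2} f(x) exp(-∫_x^{x₀} f⁻²)`. -/
noncomputable def etaMinus (f : ℝ → ℝ) (x₀ x : ℝ) : ℝ :=
  (2 : ℝ) ^ (-(1 / 2 : ℝ)) * f x * Real.exp (-∫ t in x..x₀, (f t ^ 2)⁻¹)

/-- Lemma 4.13(i): `η₊`, `η₋` solve `-ψ'' + [f''/f + f⁻⁴]ψ = 0` on `(0,b)` and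
`W(η₊,η₋) = 1`. -/
theorem eta_fundamental_system (b x₀ : ℝ) (hb : 0 < b) (hx₀ : x₀ ∈ Ioo 0 b)
    (f : ℝ → ℝ)
    (hf : ∀ x ∈ Ioo 0 b, DifferentiableAt ℝ f x)
    (hf' : ∀ x ∈ Ioo 0 b, DifferentiableAt ℝ (deriv f) x)
    (hfne : ∀ x ∈ Ioo 0 b, f x ≠ 0) :
    (∀ x ∈ Ioo 0 b,
      -deriv (deriv (etaPlus f x₀)) x +
        (deriv (deriv f) x / f x + (f x ^ 4)⁻¹) * etaPlus f x₀ x = 0) ∧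
    (∀ x ∈ Ioo 0 b,
      -deriv (deriv (etaMinus f x₀)) x +
        (deriv (deriv f) x / f x + (f x ^ 4)⁻¹) * etaMinus f x₀ x = 0) ∧
    (∀ x ∈ Ioo 0 b,
      etaPlus f x₀ x * deriv (etaMinus f x₀) x -
        deriv (etaPlus f x₀) x * etaMinus f x₀ x = 1) := by
  set c : ℝ := (2 : ℝ) ^ (-(1 / 2 : ℝ)) with hcdef
  have hc2 : c * c = 1 / 2 := by
    rw [hcdef, ← Real.rpow_add (by norm_num : (0:ℝ) < 2)]
    norm_num
  set g : ℝ → ℝ := fun x => ∫ t in x..x₀, (f t ^ 2)⁻¹ with hgdef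
  have hcontOn : ContinuousOn (fun t => (f t ^ 2)⁻¹) (Ioo 0 b) := fun t ht =>
    (((hf t ht).continuousAt.pow 2).inv₀ (pow_ne_zero 2 (hfne t ht))).continuousWithinAt
  have hgd : ∀ x ∈ Ioo (0:ℝ) b, HasDerivAt g (-(f x ^ 2)⁻¹) x := by
    intro x hx
    have hsub : uIcc x x₀ ⊆ Ioo 0 b := (ordConnected_Ioo).uIcc_subset hx hx₀
    have hint : IntervalIntegrable (fun t => (f t ^ 2)⁻¹) volume x x₀ :=
      (hcontOn.mono hsub).intervalIntegrable
    have hmeas : StronglyMeasurableAtFilter (fun t => (f t ^ 2)⁻¹) (nhds x) :=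
      hcontOn.stronglyMeasurableAtFilter isOpen_Ioo x hx
    exact intervalIntegral.integral_hasDerivAt_left hint hmeas
      (((hf x hx).continuousAt.pow 2).inv₀ (pow_ne_zero 2 (hfne x hx)))
  -- first derivatives
  have hP : ∀ x ∈ Ioo (0:ℝ) b,
      HasDerivAt (etaPlus f x₀) (c * Real.exp (g x) * (deriv f x - (f x)⁻¹)) x := by
    intro x hx
    have hfd := (hf x hx).hasDerivAt
    have hexp : HasDerivAt (fun y => Real.exp (g y)) (Real.exp (g x) * -(f x ^ 2)⁻¹) x :=
      (hgd x hx).exp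
    have key := (hfd.const_mul c).mul hexp
    have heq : c * deriv f x * Real.exp (g x) + c * f x * (Real.exp (g x) * -(f x ^ 2)⁻¹)
        = c * Real.exp (g x) * (deriv f x - (f x)⁻¹) := by
      field_simp [hfne x hx]
      ring
    exact heq ▸ key
  have hM : ∀ x ∈ Ioo (0:ℝ) b,
      HasDerivAt (etaMinus f x₀) (c * Real.exp (-g x) * (deriv f x + (f x)⁻¹)) x := by
    intro x hx
    have hfd := (hf x hx).hasDerivAt
    have hexp : HasDerivAt (fun y => Real.exp (-g y)) (Real.exp (-g x) * - -(f x ^ 2)⁻¹) x :=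
      ((hgd x hx).neg).exp
    have key := (hfd.const_mul c).mul hexp
    have heq : c * deriv f x * Real.exp (-g x) + c * f x * (Real.exp (-g x) * - -(f x ^ 2)⁻¹)
        = c * Real.exp (-g x) * (deriv f x + (f x)⁻¹) := by
      field_simp [hfne x hx]
    exact heq ▸ key
  refine ⟨?_, ?_, ?_⟩
  · intro x hx
    have hev : deriv (etaPlus f x₀) =ᶠ[nhds x]
        fun y => c * Real.exp (g y) * (deriv f y - (f y)⁻¹) := by
      filter_upwards [isOpen_Ioo.mem_nhds hx] with y hy
      exact (hP y hy).deriv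
    rw [hev.deriv_eq]
    have hfd := (hf x hx).hasDerivAt
    have hexp : HasDerivAt (fun y => Real.exp (g y)) (Real.exp (g x) * -(f x ^ 2)⁻¹) x :=
      (hgd x hx).exp
    have key := (hexp.const_mul c).mul
      ((hf' x hx).hasDerivAt.sub (hfd.inv (hfne x hx)))
    rw [(show HasDerivAt (fun y => c * Real.exp (g y) * (deriv f y - (f y)⁻¹)) _ x from key).deriv]
    show -(c * (Real.exp (g x) * -(f x ^ 2)⁻¹) * (deriv f x - (f x)⁻¹) +
        c * Real.exp (g x) * (deriv (deriv f) x - -deriv f x / f x ^ 2)) +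
        (deriv (deriv f) x / f x + (f x ^ 4)⁻¹) * (c * f x * Real.exp (g x)) = 0
    field_simp [hfne x hx]
    ring
  · intro x hx
    have hev : deriv (etaMinus f x₀) =ᶠ[nhds x]
        fun y => c * Real.exp (-g y) * (deriv f y + (f y)⁻¹) := by
      filter_upwards [isOpen_Ioo.mem_nhds hx] with y hy
      exact (hM y hy).deriv
    rw [hev.deriv_eq]
    have hfd := (hf x hx).hasDerivAt
    have hexp : HasDerivAt (fun y => Real.exp (-g y)) (Real.exp (-g x) * - -(f x ^ 2)⁻¹) x :=
      ((hgd x hx).neg).exp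
    have key := (hexp.const_mul c).mul
      ((hf' x hx).hasDerivAt.add (hfd.inv (hfne x hx)))
    rw [(show HasDerivAt (fun y => c * Real.exp (-g y) * (deriv f y + (f y)⁻¹)) _ x from key).deriv]
    show -(c * (Real.exp (-g x) * - -(f x ^ 2)⁻¹) * (deriv f x + (f x)⁻¹) +
        c * Real.exp (-g x) * (deriv (deriv f) x + -deriv f x / f x ^ 2)) +
        (deriv (deriv f) x / f x + (f x ^ 4)⁻¹) * (c * f x * Real.exp (-g x)) = 0
    field_simp [hfne x hx]
    ring
  · intro x hx
    rw [(hM x hx).deriv, (hP x hx).deriv]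
    show c * f x * Real.exp (g x) * (c * Real.exp (-g x) * (deriv f x + (f x)⁻¹)) -
        c * Real.exp (g x) * (deriv f x - (f x)⁻¹) * (c * f x * Real.exp (-g x)) = 1
    rw [Real.exp_neg]
    field_simp [hfne x hx, (Real.exp_pos (g x)).ne']
    linear_combination 2 * hc2
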